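/- Let p ∈ ℕ and let t ↦ B(t) be a continuous family of p × p real matrices such that for every t, B(t)_{ij} ≥ 0 for all i ≠ j and Σ_j B(t)_{ij} = 0 for every i. Let v : [s, T] → ℝ^p be a solution of the linear ODE v'(t) = B(t) v(t) with v_i(s) ≥ 0 for all i. Then v_i(t) ≥ 0 for all i and all t ∈ [s, T]. -/

import Mathlib

open Finset

lemma hasDerivAt_minsq (x : ℝ) :
    HasDerivAt (fun y : ℝ => (min y 0) ^ 2) (2 * min x 0) x := by
  rcases lt_trichotomy x 0 with h | h | h
  · have hev : (fun y : ℝ => y ^ 2) =ᶠ[nhds x] fun y : ℝ => (min y 0) ^ 2 := by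
      filter_upwards [isOpen_Iio.eventually_mem (show x ∈ Set.Iio 0 from h)] with y hy
      rw [min_eq_left (le_of_lt hy)]
    have h2 : HasDerivAt (fun y : ℝ => y ^ 2) (2 * x) x := by
      simpa using hasDerivAt_pow 2 x
    rw [min_eq_left h.le]
    exact h2.congr_of_eventuallyEq hev.symm
  · subst h
    rw [min_self, mul_zero, hasDerivAt_iff_isLittleO]
    have h1 : (fun y : ℝ => (min y 0) ^ 2) =O[nhds (0:ℝ)] fun y : ℝ => y ^ 2 := by
      apply Asymptotics.isBigO_of_le
      intro y
      have : |min y 0| ≤ |y| := by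
        rcases le_or_gt y 0 with hy | hy
        · rw [min_eq_left hy]
        · rw [min_eq_right hy.le]; simp [abs_nonneg]
      simpa [abs_pow, sq_abs] using pow_le_pow_left₀ (abs_nonneg _) this 2
    have h2 : (fun y : ℝ => y ^ 2) =o[nhds (0:ℝ)] fun y : ℝ => y := by
      have := (hasDerivAt_pow 2 (0:ℝ)).isLittleO
      simpa using this
    simpa using h1.trans_isLittleO h2
  · have hev : (fun _ : ℝ => (0:ℝ)) =ᶠ[nhds x] fun y : ℝ => (min y 0) ^ 2 := by
      filter_upwards [isOpen_Ioi.eventually_mem (show x ∈ Set.Ioi 0 from h)] with y hy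
      rw [min_eq_right (le_of_lt hy)]
      norm_num
    rw [min_eq_right h.le, mul_zero]
    exact (hasDerivAt_const x (0:ℝ)).congr_of_eventuallyEq hev.symm

/-- Discrete maximum principle: a linear ODE with Metzler generator with zero row sums
preserves nonnegativity of the solution. -/
theorem metzler_preserves_nonneg (p : ℕ) (s T : ℝ) (hsT : s ≤ T)
    (B : ℝ → Matrix (Fin p) (Fin p) ℝ)
    (hcont : Continuous B)
    (hoff : ∀ t : ℝ, ∀ i j : Fin p, i ≠ j → 0 ≤ B t i j)
    (hrow : ∀ t : ℝ, ∀ i : Fin p, ∑ j, B t i j = 0)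
    (v : ℝ → Fin p → ℝ)
    (hderiv : ∀ t ∈ Set.Icc s T, ∀ i : Fin p,
      HasDerivAt (fun u => v u i) ((B t).mulVec (v t) i) t)
    (hinit : ∀ i : Fin p, 0 ≤ v s i) :
    ∀ t ∈ Set.Icc s T, ∀ i : Fin p, 0 ≤ v t i := by
  -- the "negative-part energy"
  set W : ℝ → ℝ := fun t => ∑ i, (min (v t i) 0) ^ 2 with hWdef
  set W' : ℝ → ℝ := fun t => ∑ i, 2 * min (v t i) 0 * (B t).mulVec (v t) i with hW'def
  -- bound on the entries of B on [s, T]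
  have hg : Continuous fun t => ∑ i : Fin p, ∑ j : Fin p, |B t i j| :=
    continuous_finset_sum _ fun i _ => continuous_finset_sum _ fun j _ =>
      (hcont.matrix_elem i j).abs
  obtain ⟨t₀, ht₀, hmax'⟩ :=
    isCompact_Icc.exists_isMaxOn (Set.nonempty_Icc.2 hsT)
      (hg.continuousOn : ContinuousOn _ (Set.Icc s T))
  have hmax : ∀ t ∈ Set.Icc s T, (∑ i : Fin p, ∑ j : Fin p, |B t i j|)
      ≤ ∑ i : Fin p, ∑ j : Fin p, |B t₀ i j| := fun t ht => hmax' ht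
  set M : ℝ := ∑ i : Fin p, ∑ j : Fin p, |B t₀ i j| with hMdef
  have hM0 : 0 ≤ M := Finset.sum_nonneg fun i _ => Finset.sum_nonneg fun j _ => abs_nonneg _
  have hM : ∀ t ∈ Set.Icc s T, ∀ i j : Fin p, B t i j ≤ M := by
    intro t ht i j
    calc B t i j ≤ |B t i j| := le_abs_self _
      _ ≤ ∑ j' : Fin p, |B t i j'| := Finset.single_le_sum (f := fun j' => |B t i j'|) (fun k _ => abs_nonneg _) (mem_univ j)
      _ ≤ ∑ i' : Fin p, ∑ j' : Fin p, |B t i' j'| :=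
          Finset.single_le_sum (f := fun i' => ∑ j' : Fin p, |B t i' j'|)
            (fun k _ => Finset.sum_nonneg fun l _ => abs_nonneg _) (mem_univ i)
      _ ≤ M := hmax t ht
  set K : ℝ := (p : ℝ) * M with hKdef
  -- derivative of W
  have hWd : ∀ t ∈ Set.Icc s T, HasDerivAt W (W' t) t := by
    intro t ht
    exact HasDerivAt.fun_sum fun i _ => by have := (hasDerivAt_minsq (v t i)).comp t (hderiv t ht i); exact this
  -- the key differential inequality
  have hbound : ∀ t ∈ Set.Ico s T, W' t ≤ K * W t + 0 := by
    intro t ht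
    have ht' : t ∈ Set.Icc s T := Set.Ico_subset_Icc_self ht
    rw [add_zero]
    have hterm : ∀ i : Fin p, 2 * min (v t i) 0 * (B t).mulVec (v t) i
        ≤ ∑ j, M * (min (v t j) 0) ^ 2 := by
      intro i
      have hmv : (B t).mulVec (v t) i = ∑ j, B t i j * (v t j - v t i) := by
        simp only [Matrix.mulVec, dotProduct, mul_sub]
        rw [Finset.sum_sub_distrib, ← Finset.sum_mul, hrow t i, zero_mul, sub_zero]
      rw [hmv, Finset.mul_sum]
      apply Finset.sum_le_sum
      intro j _
      rcases eq_or_ne i j with rfl | hij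
      · simp [mul_nonneg hM0 (sq_nonneg _)]
      · have hB0 : 0 ≤ B t i j := hoff t i j hij
        have hBM : B t i j ≤ M := hM t ht' i j
        have hni : min (v t i) 0 ≤ 0 := min_le_right _ _
        have hniv : min (v t i) 0 ≤ v t i := min_le_left _ _
        have hnjv : min (v t j) 0 ≤ v t j := min_le_left _ _
        have hsq : (min (v t i) 0) ^ 2 ≤ min (v t i) 0 * v t i := by
          rcases le_or_gt 0 (v t i) with h | h
          · rw [min_eq_right h]; simp
          · rw [min_eq_left h.le]; ring_nf; simp
        have hkey : 2 * min (v t i) 0 * (v t j - v t i) ≤ (min (v t j) 0) ^ 2 := by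
          nlinarith [sq_nonneg (min (v t i) 0 - min (v t j) 0),
            mul_le_mul_of_nonpos_left hnjv hni]
        calc 2 * min (v t i) 0 * (B t i j * (v t j - v t i))
            = B t i j * (2 * min (v t i) 0 * (v t j - v t i)) := by ring
          _ ≤ B t i j * (min (v t j) 0) ^ 2 := mul_le_mul_of_nonneg_left hkey hB0
          _ ≤ M * (min (v t j) 0) ^ 2 := mul_le_mul_of_nonneg_right hBM (sq_nonneg _)
    calc W' t ≤ ∑ _i : Fin p, ∑ j, M * (min (v t j) 0) ^ 2 :=
          Finset.sum_le_sum fun i _ => hterm i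
      _ = (p : ℝ) * ∑ j, M * (min (v t j) 0) ^ 2 := by
          rw [Finset.sum_const, card_univ, Fintype.card_fin, nsmul_eq_mul]
      _ = K * W t := by simp only [hKdef, hWdef, Finset.mul_sum, mul_assoc]
  -- initial condition
  have hWs : W s ≤ 0 := by
    have : ∀ i : Fin p, (min (v s i) 0) ^ 2 = 0 := fun i => by
      rw [min_eq_right (hinit i)]; norm_num
    simp [hWdef, this]
  -- continuity of W on [s,T]
  have hWc : ContinuousOn W (Set.Icc s T) := fun t ht =>
    (hWd t ht).continuousAt.continuousWithinAt
  -- Grönwall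
  have hGron := le_gronwallBound_of_liminf_deriv_right_le hWc
    (fun x hx r hr =>
      ((hWd x (Set.Ico_subset_Icc_self hx)).hasDerivWithinAt.liminf_right_slope_le hr))
    hWs hbound
  intro t ht i
  have hWt : W t ≤ 0 := by
    have := hGron t ht
    rwa [gronwallBound_ε0, zero_mul] at this
  have hW0 : W t = 0 :=
    le_antisymm hWt (Finset.sum_nonneg fun i _ => sq_nonneg _)
  have : (min (v t i) 0) ^ 2 = 0 := by
    have := (Finset.sum_eq_zero_iff_of_nonneg fun j (_ : j ∈ univ) => sq_nonneg _).1 hW0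
    exact this i (mem_univ i)
  have hmin : min (v t i) 0 = 0 := by
    exact pow_eq_zero_iff (n := 2) (by norm_num) |>.1 this
  exact min_eq_right_iff.1 hmin
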